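/- arXiv:1601.03175 — 2 statements merged into one kernel-verified Lean document; each statement's English description precedes it below -/
import Mathlib

section
/- Let T be a bounded linear operator on an infinite-dimensional complex Banach space. T satisfies property (Z_{E_a}) if and only if T satisfies property (k) (i.e. σ(T)\σ_W(T) = E(T)) and E_a(T) = E(T). -/
open Set

noncomputable section

namespace ZProps

variable {X : Type*} [NormedAddCommGroup X] [NormedSpace ℂ X] [CompleteSpace X]

/-- The spectrum of `T`. -/
def sp (T : X →L[ℂ] X) : Set ℂ := spectrum ℂ T

/-- The approximate point spectrum: `λ` such that `T - λ` is not bounded below. -/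
def spa (T : X →L[ℂ] X) : Set ℂ :=
  {l | ¬ ∃ c > (0:ℝ), ∀ x : X, c * ‖x‖ ≤ ‖(T - l • 1) x‖}

/-- The point spectrum (eigenvalues). -/
def spp (T : X →L[ℂ] X) : Set ℂ := {l | ∃ x : X, x ≠ 0 ∧ T x = l • x}

/-- Eigenvalues of finite multiplicity. -/
def spp0 (T : X →L[ℂ] X) : Set ℂ :=
  {l | l ∈ spp T ∧ FiniteDimensional ℂ (LinearMap.ker ((T - l • 1 : X →L[ℂ] X) : X →ₗ[ℂ] X))}

/-- Isolated points of a subset of `ℂ`. -/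
def iso (A : Set ℂ) : Set ℂ :=
  {l | l ∈ A ∧ ∃ ε > (0:ℝ), ∀ μ ∈ A, μ ≠ l → ε ≤ ‖μ - l‖}

def Ea (T : X →L[ℂ] X) : Set ℂ := iso (spa T) ∩ spp T
def Ea0 (T : X →L[ℂ] X) : Set ℂ := iso (spa T) ∩ spp0 T
def Efull (T : X →L[ℂ] X) : Set ℂ := iso (sp T) ∩ spp T
def E0 (T : X →L[ℂ] X) : Set ℂ := iso (sp T) ∩ spp0 T

/-- Fredholm operator: finite-dimensional kernel, closed range of finite codimension. -/
def IsFredholmOp (S : X →L[ℂ] X) : Prop :=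
  FiniteDimensional ℂ (LinearMap.ker (S : X →ₗ[ℂ] X)) ∧
  FiniteDimensional ℂ (X ⧸ LinearMap.range (S : X →ₗ[ℂ] X)) ∧
  IsClosed ((LinearMap.range (S : X →ₗ[ℂ] X) : Submodule ℂ X) : Set X)

/-- Weyl operator: Fredholm of index 0. -/
def IsWeylOp (S : X →L[ℂ] X) : Prop :=
  IsFredholmOp S ∧
  Module.finrank ℂ (LinearMap.ker (S : X →ₗ[ℂ] X)) = Module.finrank ℂ (X ⧸ LinearMap.range (S : X →ₗ[ℂ] X))

/-- Weyl spectrum. -/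
def spW (T : X →L[ℂ] X) : Set ℂ := {l | ¬ IsWeylOp (T - l • 1)}

def HasFiniteAscent (S : X →L[ℂ] X) : Prop :=
  ∃ n : ℕ, LinearMap.ker ((S ^ n : X →L[ℂ] X) : X →ₗ[ℂ] X) = LinearMap.ker ((S ^ (n + 1) : X →L[ℂ] X) : X →ₗ[ℂ] X)

def HasFiniteDescent (S : X →L[ℂ] X) : Prop :=
  ∃ n : ℕ, LinearMap.range ((S ^ n : X →L[ℂ] X) : X →ₗ[ℂ] X) = LinearMap.range ((S ^ (n + 1) : X →L[ℂ] X) : X →ₗ[ℂ] X)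

/-- Ascent of an operator (junk value if infinite). -/
def ascent (S : X →L[ℂ] X) : ℕ :=
  sInf {n : ℕ | LinearMap.ker ((S ^ n : X →L[ℂ] X) : X →ₗ[ℂ] X) = LinearMap.ker ((S ^ (n + 1) : X →L[ℂ] X) : X →ₗ[ℂ] X)}

/-- Poles of the resolvent: spectral points where `T - λ` has finite ascent and descent. -/
def poles (T : X →L[ℂ] X) : Set ℂ :=
  {l | l ∈ sp T ∧ HasFiniteAscent (T - l • 1) ∧ HasFiniteDescent (T - l • 1)}

/-- Poles of finite rank. -/
def poles0 (T : X →L[ℂ] X) : Set ℂ :=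
  {l | l ∈ poles T ∧ FiniteDimensional ℂ (LinearMap.ker ((T - l • 1 : X →L[ℂ] X) : X →ₗ[ℂ] X))}

/-- Left poles: `λ ∈ σ_a(T)` with finite ascent `a = a(T-λ)` and `R((T-λ)^(a+1))` closed. -/
def leftPoles (T : X →L[ℂ] X) : Set ℂ :=
  {l | l ∈ spa T ∧ HasFiniteAscent (T - l • 1) ∧
    IsClosed ((LinearMap.range (((T - l • 1) ^ (ascent (T - l • 1) + 1) : X →L[ℂ] X) : X →ₗ[ℂ] X) : Submodule ℂ X) : Set X)}

/-- Left poles of finite rank. -/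
def leftPoles0 (T : X →L[ℂ] X) : Set ℂ :=
  {l | l ∈ leftPoles T ∧ FiniteDimensional ℂ (LinearMap.ker ((T - l • 1 : X →L[ℂ] X) : X →ₗ[ℂ] X))}

/-- A linear endomorphism of a normed space is Weyl (Fredholm of index 0). -/
def LMIsWeyl {V : Type*} [NormedAddCommGroup V] [Module ℂ V] (L : V →ₗ[ℂ] V) : Prop :=
  FiniteDimensional ℂ (LinearMap.ker L) ∧
  FiniteDimensional ℂ (V ⧸ LinearMap.range L) ∧
  IsClosed ((LinearMap.range L : Submodule ℂ V) : Set V) ∧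
  Module.finrank ℂ (LinearMap.ker L) = Module.finrank ℂ (V ⧸ LinearMap.range L)

lemma mapsTo_range_pow (S : X →L[ℂ] X) (n : ℕ) :
    ∀ x ∈ LinearMap.range ((S ^ n : X →L[ℂ] X) : X →ₗ[ℂ] X),
      S x ∈ LinearMap.range ((S ^ n : X →L[ℂ] X) : X →ₗ[ℂ] X) := by
  rintro x ⟨y, rfl⟩
  exact ⟨S y, by
    have h : (S ^ n) * S = S * (S ^ n) := (Commute.refl S).pow_left n
    calc (S ^ n) (S y) = ((S ^ n) * S) y := rfl
    _ = (S * S ^ n) y := by rw [h]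
    _ = S ((S ^ n) y) := rfl⟩

/-- B-Weyl operator: for some `n`, `R(S^n)` is closed and the restriction of `S` to
`R(S^n)` is a Weyl operator. -/
def IsBWeylOp (S : X →L[ℂ] X) : Prop :=
  ∃ n : ℕ, IsClosed ((LinearMap.range ((S ^ n : X →L[ℂ] X) : X →ₗ[ℂ] X) : Submodule ℂ X) : Set X) ∧
    LMIsWeyl ((S : X →ₗ[ℂ] X).restrict (mapsTo_range_pow S n))

/-- B-Weyl spectrum. -/
def spBW (T : X →L[ℂ] X) : Set ℂ := {l | ¬ IsBWeylOp (T - l • 1)}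

/-- Single-valued extension property at a point. -/
def HasSVEPAt (T : X →L[ℂ] X) (l : ℂ) : Prop :=
  ∀ U : Set ℂ, IsOpen U → l ∈ U → ∀ f : ℂ → X, AnalyticOnNhd ℂ f U →
    (∀ μ ∈ U, (T - μ • 1) (f μ) = 0) → ∀ μ ∈ U, f μ = 0

/-- Riesz operator: `R - μ` is Fredholm for every nonzero `μ`. -/
def IsRieszOp (R : X →L[ℂ] X) : Prop :=
  ∀ μ : ℂ, μ ≠ 0 → IsFredholmOp (R - μ • 1)

/-- Property `(Z_{E_a})`. -/
def PropZEa (T : X →L[ℂ] X) : Prop := sp T \ spW T = Ea T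

/-- Property `(Z_{Π_a})`. -/
def PropZPa (T : X →L[ℂ] X) : Prop := sp T \ spW T = leftPoles T

/-- Weyl's theorem. -/
def WeylThm (T : X →L[ℂ] X) : Prop := sp T \ spW T = E0 T

/-- Browder's theorem. -/
def BrowderThm (T : X →L[ℂ] X) : Prop := sp T \ spW T = poles0 T

/-- Property `(k)`. -/
def PropK (T : X →L[ℂ] X) : Prop := sp T \ spW T = Efull T

/-- Property `(gaw)`. -/
def PropGaw (T : X →L[ℂ] X) : Prop := sp T \ spBW T = Ea T

/-- Property `(aw)`. -/
def PropAw (T : X →L[ℂ] X) : Prop := sp T \ spW T = Ea0 T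

/-- Property `(Baw)`. -/
def PropBaw (T : X →L[ℂ] X) : Prop := sp T \ spBW T = Ea0 T

/-- Property `(gab)`. -/
def PropGab (T : X →L[ℂ] X) : Prop := sp T \ spBW T = leftPoles T

/-- Property `(ab)`. -/
def PropAb (T : X →L[ℂ] X) : Prop := sp T \ spW T = leftPoles0 T

end ZProps

end


section Aux
open ZProps

variable {X : Type*} [NormedAddCommGroup X] [NormedSpace ℂ X] [CompleteSpace X]

lemma zaux_apply_sub_smul (T : X →L[ℂ] X) (l : ℂ) (x : X) :
    (T - l • 1) x = T x - l • x := by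
  simp [ContinuousLinearMap.sub_apply]

lemma zaux_algebraMap_eq (l : ℂ) :
    (algebraMap ℂ (X →L[ℂ] X)) l = l • 1 := by
  simp [Algebra.algebraMap_eq_smul_one]

lemma zaux_isUnit_of_bijective (f : X →L[ℂ] X) (hinj : Function.Injective f)
    (hsurj : Function.Surjective f) : IsUnit f := by
  let e := ContinuousLinearEquiv.ofBijective f (LinearMap.ker_eq_bot.mpr hinj)
    (LinearMap.range_eq_top.mpr hsurj)
  have hef : ∀ x, e x = f x := fun x => rfl
  refine ⟨⟨f, e.symm.toContinuousLinearMap, ?_, ?_⟩, rfl⟩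
  · ext x
    simp only [ContinuousLinearMap.mul_apply, ContinuousLinearMap.one_apply,
      ContinuousLinearEquiv.coe_coe]
    rw [← hef]
    exact e.apply_symm_apply x
  · ext x
    simp only [ContinuousLinearMap.mul_apply, ContinuousLinearMap.one_apply,
      ContinuousLinearEquiv.coe_coe]
    rw [← hef]
    exact e.symm_apply_apply x

lemma zaux_spp_subset_spa (T : X →L[ℂ] X) : spp T ⊆ spa T := by
  rintro l ⟨x, hx0, hx⟩
  rintro ⟨c, hc, hb⟩
  have h0 : (T - l • 1) x = 0 := by
    rw [zaux_apply_sub_smul, hx, sub_self]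
  have := hb x
  rw [h0, norm_zero] at this
  have : ‖x‖ ≤ 0 := by nlinarith [norm_nonneg x]
  exact hx0 (norm_le_zero_iff.mp this)

lemma zaux_not_sp_bounded_below (T : X →L[ℂ] X) (l : ℂ) (hl : l ∉ sp T) :
    ∃ c > (0:ℝ), ∀ x : X, c * ‖x‖ ≤ ‖(T - l • 1) x‖ := by
  have hu : IsUnit ((algebraMap ℂ (X →L[ℂ] X)) l - T) := spectrum.notMem_iff.mp hl
  rw [zaux_algebraMap_eq] at hu
  obtain ⟨u, hu⟩ := hu.neg
  have hvu : (↑u⁻¹ * ↑u : X →L[ℂ] X) = 1 := u.inv_mul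
  have hneg : (↑u : X →L[ℂ] X) = T - l • 1 := by rw [hu]; abel
  refine ⟨(‖(↑u⁻¹ : X →L[ℂ] X)‖ + 1)⁻¹, by positivity, fun x => ?_⟩
  have hx : x = (↑u⁻¹ : X →L[ℂ] X) ((T - l • 1) x) := by
    rw [← hneg, ← ContinuousLinearMap.mul_apply, hvu, ContinuousLinearMap.one_apply]
  have hb : ‖x‖ ≤ ‖(↑u⁻¹ : X →L[ℂ] X)‖ * ‖(T - l • 1) x‖ := by
    conv_lhs => rw [hx]
    exact (↑u⁻¹ : X →L[ℂ] X).le_opNorm _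
  rw [inv_mul_le_iff₀ (by positivity)]
  nlinarith [norm_nonneg ((T - l • 1) x), norm_nonneg (↑u⁻¹ : X →L[ℂ] X)]

lemma zaux_spa_subset_sp (T : X →L[ℂ] X) : spa T ⊆ sp T := by
  intro l hl
  by_contra h
  exact hl (zaux_not_sp_bounded_below T l h)

lemma zaux_spp_subset_sp (T : X →L[ℂ] X) : spp T ⊆ sp T :=
  fun l hl => zaux_spa_subset_sp T (zaux_spp_subset_spa T hl)

lemma zaux_Efull_subset_Ea (T : X →L[ℂ] X) : Efull T ⊆ Ea T := by
  rintro l ⟨⟨hlsp, ε, hε, hsep⟩, hlp⟩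
  exact ⟨⟨zaux_spp_subset_spa T hlp, ε, hε,
    fun μ hμ hne => hsep μ (zaux_spa_subset_sp T hμ) hne⟩, hlp⟩

set_option maxHeartbeats 2000000 in
/-- Key lemma: if `T - l` is Weyl and `l` is isolated in the approximate point
spectrum, then `l` is isolated in the spectrum. -/
lemma zaux_iso_sp_of_weyl (T : X →L[ℂ] X) (l : ℂ)
    (hW : IsWeylOp (T - l • 1)) (hiso : l ∈ iso (spa T)) (hsp : l ∈ sp T) :
    l ∈ iso (sp T) := by
  set A : X →L[ℂ] X := T - l • 1 with hA
  obtain ⟨⟨hker, hcoker, hclosed⟩, hidx⟩ := hW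
  haveI := hker
  haveI := hcoker
  set n := Module.finrank ℂ (LinearMap.ker (A : X →ₗ[ℂ] X)) with hn
  let b : Module.Basis (Fin n) ℂ (LinearMap.ker (A : X →ₗ[ℂ] X)) := Module.finBasis ℂ _
  let c : Module.Basis (Fin n) ℂ (X ⧸ LinearMap.range (A : X →ₗ[ℂ] X)) :=
    (Module.finBasis ℂ _).reindex (finCongr hidx.symm)
  -- lift the quotient basis
  have hu : ∀ i : Fin n, ∃ x : X, (LinearMap.range (A : X →ₗ[ℂ] X)).mkQ x = c i :=
    fun i => (LinearMap.range (A : X →ₗ[ℂ] X)).mkQ_surjective (c i)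
  choose u hu using hu
  -- extend the coordinate functionals
  have hgex : ∀ i : Fin n, ∃ g : X →L[ℂ] ℂ,
      ∀ x : (LinearMap.ker (A : X →ₗ[ℂ] X)), g x = b.coord i x := by
    intro i
    obtain ⟨g, hg, -⟩ := exists_extension_norm_eq (LinearMap.ker (A : X →ₗ[ℂ] X))
      (LinearMap.toContinuousLinearMap (b.coord i))
    exact ⟨g, fun x => by rw [hg]; simp⟩
  choose g hg using hgex
  -- the finite rank correction
  set K : X →L[ℂ] X := ∑ i, (g i).smulRight (u i) with hK
  have hKapp : ∀ x : X, K x = ∑ i, g i x • u i := by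
    intro x
    rw [hK]
    simp [ContinuousLinearMap.sum_apply, ContinuousLinearMap.smulRight_apply]
  set S : X →L[ℂ] X := A + K with hS
  -- S is injective
  have hSinj : Function.Injective S := by
    rw [injective_iff_map_eq_zero]
    intro x hx
    have hx' : A x + K x = 0 := by
      rw [← hx, hS]; simp [ContinuousLinearMap.add_apply]
    have hmkA : (LinearMap.range (A : X →ₗ[ℂ] X)).mkQ (A x) = 0 := by
      rw [Submodule.mkQ_apply]
      exact (Submodule.Quotient.mk_eq_zero _).mpr ⟨x, rfl⟩
    have hmkK : (LinearMap.range (A : X →ₗ[ℂ] X)).mkQ (K x) = 0 := by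
      have : (LinearMap.range (A : X →ₗ[ℂ] X)).mkQ (A x + K x) = 0 := by rw [hx']; simp
      rw [map_add, hmkA, zero_add] at this
      exact this
    have hsum : ∑ i, g i x • c i = 0 := by
      rw [← hmkK, hKapp]
      rw [map_sum]
      congr 1
      ext i
      rw [map_smul, hu]
    have hcoef : ∀ i, g i x = 0 :=
      Fintype.linearIndependent_iff.mp c.linearIndependent _ hsum
    have hKx : K x = 0 := by
      rw [hKapp]
      simp [hcoef]
    have hAx : A x = 0 := by rw [← hx', hKx, add_zero]
    have hxker : x ∈ LinearMap.ker (A : X →ₗ[ℂ] X) := LinearMap.mem_ker.mpr hAx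
    have hrepr : ∀ i, b.repr ⟨x, hxker⟩ i = 0 := by
      intro i
      have := hg i ⟨x, hxker⟩
      rw [hcoef i] at this
      rw [← Module.Basis.coord_apply, ← this]
    have : (⟨x, hxker⟩ : LinearMap.ker (A : X →ₗ[ℂ] X)) = 0 := by
      rw [← b.repr.map_eq_zero_iff]
      ext i
      exact hrepr i
    exact congrArg Subtype.val this
  -- S is surjective
  have hSsurj : Function.Surjective S := by
    intro y
    set d : Fin n → ℂ := fun i => c.repr ((LinearMap.range (A : X →ₗ[ℂ] X)).mkQ y) i with hd
    have hmky : (LinearMap.range (A : X →ₗ[ℂ] X)).mkQ (y - ∑ i, d i • u i) = 0 := by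
      rw [map_sub, map_sum]
      have h1 : ∑ i, (LinearMap.range (A : X →ₗ[ℂ] X)).mkQ (d i • u i) = ∑ i, d i • c i := by
        congr 1; ext i; rw [map_smul, hu]
      rw [h1, hd]
      have := c.sum_repr ((LinearMap.range (A : X →ₗ[ℂ] X)).mkQ y)
      rw [this, sub_self]
    have hmem : y - ∑ i, d i • u i ∈ LinearMap.range (A : X →ₗ[ℂ] X) := by
      rw [Submodule.mkQ_apply] at hmky
      exact (Submodule.Quotient.mk_eq_zero _).mp hmky
    obtain ⟨w, hw⟩ := hmem
    set z : LinearMap.ker (A : X →ₗ[ℂ] X) := ∑ j, (d j - g j w) • b j with hz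
    refine ⟨w + ↑z, ?_⟩
    have hAz : A ↑z = 0 := z.2
    have hgz : ∀ i, g i ↑z = d i - g i w := by
      intro i
      rw [hg i z, Module.Basis.coord_apply, hz, b.repr_sum_self]
    have hgx : ∀ i, g i (w + ↑z) = d i := by
      intro i
      rw [map_add, hgz i]
      ring
    have hKx : K (w + ↑z) = ∑ i, d i • u i := by
      rw [hKapp]
      congr 1; ext i; rw [hgx i]
    calc S (w + ↑z) = A (w + ↑z) + K (w + ↑z) := by
          rw [hS]; simp [ContinuousLinearMap.add_apply]
      _ = A w + A ↑z + K (w + ↑z) := by rw [map_add]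
      _ = (y - ∑ i, d i • u i) + 0 + ∑ i, d i • u i := by rw [show A w = _ from hw, hAz, hKx]
      _ = y := by abel
  have hSunit : IsUnit S := zaux_isUnit_of_bijective S hSinj hSsurj
  -- 0 is not in the spectrum of S, so a ball around 0 avoids it
  have h0S : (0:ℂ) ∉ spectrum ℂ S := by
    rw [spectrum.notMem_iff, map_zero, zero_sub]
    exact hSunit.neg
  obtain ⟨δ, hδ, hball⟩ := Metric.isOpen_iff.mp (spectrum.isClosed S).isOpen_compl 0 h0S
  obtain ⟨hlspa, ε, hε, hsep⟩ := hiso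
  refine ⟨hsp, min ε δ, lt_min hε hδ, ?_⟩
  intro ν hν hνl
  by_contra hcon
  push_neg at hcon
  set μ : ℂ := ν - l with hμ
  have hμ0 : μ ≠ 0 := sub_ne_zero.mpr hνl
  have hμε : ‖μ‖ < ε := lt_of_lt_of_le hcon (min_le_left _ _)
  have hμδ : ‖μ‖ < δ := lt_of_lt_of_le hcon (min_le_right _ _)
  -- ν is not in the approximate point spectrum
  have hνspa : ν ∉ spa T := by
    intro hmem
    exact absurd (hsep ν hmem hνl) (not_le.mpr hμε)
  -- so T - ν is injective (bounded below)
  have hbb : ∃ c > (0:ℝ), ∀ x : X, c * ‖x‖ ≤ ‖(T - ν • 1) x‖ := not_not.mp hνspa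
  have hTνinj : Function.Injective (T - ν • (1 : X →L[ℂ] X)) := by
    rw [injective_iff_map_eq_zero]
    intro x hx
    obtain ⟨cc, hcc, hb⟩ := hbb
    have := hb x
    rw [hx, norm_zero] at this
    have : ‖x‖ ≤ 0 := by nlinarith [norm_nonneg x]
    exact norm_le_zero_iff.mp this
  -- rewrite T - ν = A - μ
  have hAμ : A - μ • (1 : X →L[ℂ] X) = T - ν • 1 := by
    rw [hA, sub_sub, ← add_smul]
    congr 2
    rw [hμ]; ring
  -- S - μ is invertible
  have hμS : μ ∉ spectrum ℂ S := by
    apply hball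
    rw [Metric.mem_ball, dist_zero_right]
    exact hμδ
  have hSμunit : IsUnit (S - μ • (1 : X →L[ℂ] X)) := by
    rw [spectrum.notMem_iff, zaux_algebraMap_eq] at hμS
    have := hμS.neg
    rwa [neg_sub] at this
  obtain ⟨uS, huS⟩ := hSμunit
  set V : X →L[ℂ] X := ↑uS⁻¹ with hV
  have huV : (↑uS : X →L[ℂ] X) * V = 1 := uS.mul_inv
  set B : X →L[ℂ] X := 1 - V * K with hB
  -- the factorization
  have hfact : A - μ • (1 : X →L[ℂ] X) = ↑uS * B := by
    rw [hB, mul_sub, mul_one, ← mul_assoc, huV, one_mul, huS, hS]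
    abel
  have hBapp : ∀ x : X, B x = x - V (K x) := by
    intro x
    rw [hB]
    simp [ContinuousLinearMap.sub_apply, ContinuousLinearMap.mul_apply]
  -- B is injective
  have hBinj : Function.Injective B := by
    intro x y hxy
    apply hTνinj
    rw [← hAμ]
    have h1 : (A - μ • (1 : X →L[ℂ] X)) x = (↑uS : X →L[ℂ] X) (B x) := by
      rw [hfact, ContinuousLinearMap.mul_apply]
    have h2 : (A - μ • (1 : X →L[ℂ] X)) y = (↑uS : X →L[ℂ] X) (B y) := by
      rw [hfact, ContinuousLinearMap.mul_apply]
    rw [h1, h2, hxy]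
  -- B is surjective via the finite rank argument
  set W : Submodule ℂ X := Submodule.span ℂ (Set.range (fun i => V (u i))) with hW
  haveI hWfd : FiniteDimensional ℂ W :=
    FiniteDimensional.span_of_finite ℂ (Set.finite_range _)
  have hVK : ∀ x : X, V (K x) ∈ W := by
    intro x
    rw [hKapp, map_sum]
    apply Submodule.sum_mem
    intro i _
    rw [map_smul]
    exact Submodule.smul_mem _ _ (Submodule.subset_span ⟨i, rfl⟩)
  have hBW : ∀ x ∈ W, (B : X →ₗ[ℂ] X) x ∈ W := by
    intro x hx
    rw [ContinuousLinearMap.coe_coe, hBapp]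
    exact Submodule.sub_mem _ hx (hVK x)
  set ψ : W →ₗ[ℂ] W := (B : X →ₗ[ℂ] X).restrict hBW with hψ
  have hψinj : Function.Injective ψ := by
    intro w w' hww
    have : B ↑w = B ↑w' := by
      have h1 := congrArg Subtype.val hww
      rw [hψ] at h1
      simpa [LinearMap.restrict_apply] using h1
    exact Subtype.ext (hBinj this)
  have hψsurj : Function.Surjective ψ := LinearMap.injective_iff_surjective.mp hψinj
  have hBsurj : Function.Surjective B := by
    intro y
    obtain ⟨w, hw⟩ := hψsurj ⟨V (K y), hVK y⟩
    have hwv : B ↑w = V (K y) := by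
      have h1 := congrArg Subtype.val hw
      rw [hψ] at h1
      simpa [LinearMap.restrict_apply] using h1
    refine ⟨y + ↑w, ?_⟩
    rw [map_add, hwv, hBapp]
    abel
  -- hence T - ν is bijective, contradiction with ν ∈ sp T
  have hTνsurj : Function.Surjective (T - ν • (1 : X →L[ℂ] X)) := by
    intro y
    obtain ⟨x, hx⟩ := hBsurj (V y)
    refine ⟨x, ?_⟩
    rw [← hAμ, hfact, ContinuousLinearMap.mul_apply, hx, ← ContinuousLinearMap.mul_apply,
      huV, ContinuousLinearMap.one_apply]
  have : ν ∉ sp T := by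
    rw [sp, spectrum.notMem_iff, zaux_algebraMap_eq]
    have h := zaux_isUnit_of_bijective (T - ν • 1) hTνinj hTνsurj
    have := h.neg
    rwa [neg_sub] at this
  exact this hν

end Aux

open ZProps in
theorem stmt4 {X : Type*} [NormedAddCommGroup X] [NormedSpace ℂ X] [CompleteSpace X]
    (hinf : ¬ FiniteDimensional ℂ X) (T : X →L[ℂ] X) :
    PropZEa T ↔ PropK T ∧ Ea T = Efull T := by
  constructor
  · intro h
    have hEa : Ea T = Efull T := by
      apply Set.Subset.antisymm
      · intro l hl
        have hl' : l ∈ sp T \ spW T := h ▸ hl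
        have hW : IsWeylOp (T - l • 1) := not_not.mp hl'.2
        exact ⟨zaux_iso_sp_of_weyl T l hW hl.1 hl'.1, hl.2⟩
      · exact zaux_Efull_subset_Ea T
    refine ⟨?_, hEa⟩
    rw [PropK, ← hEa]
    exact h
  · rintro ⟨hk, he⟩
    rw [PropZEa, he]
    exact hk
end

section
/- Let T be a bounded linear operator on an infinite-dimensional complex Banach space X. If T satisfies property (Z_{Π_a}), i.e. σ(T)\σ_W(T) = Π_a(T), then Π_a^0(T) = Π_a(T) = Π^0(T) = Π(T). -/
open Set

namespace ZAux

open Module Submodule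

section Alg

variable {V : Type*} [AddCommGroup V] [Module ℂ V]

lemma fd_ext (N : Submodule ℂ V) (h1 : FiniteDimensional ℂ N)
    (h2 : FiniteDimensional ℂ (V ⧸ N)) : FiniteDimensional ℂ V := by
  have h : Module.rank ℂ V < Cardinal.aleph0 := by
    rw [← N.rank_quotient_add_rank]
    exact Cardinal.add_lt_aleph0 (rank_lt_aleph0 ℂ _) (rank_lt_aleph0 ℂ _)
  exact Module.rank_lt_aleph0_iff.mp h

lemma fd_of_ker_range {W : Type*} [AddCommGroup W] [Module ℂ W] (f : V →ₗ[ℂ] W)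
    (h1 : FiniteDimensional ℂ (LinearMap.ker f)) (h2 : FiniteDimensional ℂ (LinearMap.range f)) :
    FiniteDimensional ℂ V := by
  haveI := h2
  exact fd_ext _ h1 f.quotKerEquivRange.symm.finiteDimensional

lemma fd_quot_of_le (N P : Submodule ℂ V) (hNP : N ≤ P) (h : FiniteDimensional ℂ (V ⧸ N)) :
    FiniteDimensional ℂ (V ⧸ P) := by
  haveI := h
  exact (Submodule.quotientQuotientEquivQuotient N P hNP).finiteDimensional

lemma QF (N P : Submodule ℂ V) (hNP : N ≤ P) (h : FiniteDimensional ℂ (V ⧸ N)) :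
    finrank ℂ (V ⧸ N) = finrank ℂ (P.map N.mkQ) + finrank ℂ (V ⧸ P) := by
  haveI := h
  have h1 := Submodule.finrank_quotient_add_finrank (P.map N.mkQ)
  rw [(Submodule.quotientQuotientEquivQuotient N P hNP).finrank_eq] at h1
  omega

lemma IA (A B : V →ₗ[ℂ] V)
    (hkA : FiniteDimensional ℂ (LinearMap.ker A)) (hkB : FiniteDimensional ℂ (LinearMap.ker B))
    (hcA : FiniteDimensional ℂ (V ⧸ LinearMap.range A))
    (hcB : FiniteDimensional ℂ (V ⧸ LinearMap.range B)) :
    FiniteDimensional ℂ (LinearMap.ker (A ∘ₗ B)) ∧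
    FiniteDimensional ℂ (V ⧸ LinearMap.range (A ∘ₗ B)) ∧
    finrank ℂ (LinearMap.ker (A ∘ₗ B)) + finrank ℂ (V ⧸ LinearMap.range A)
        + finrank ℂ (V ⧸ LinearMap.range B)
      = finrank ℂ (LinearMap.ker A) + finrank ℂ (LinearMap.ker B)
        + finrank ℂ (V ⧸ LinearMap.range (A ∘ₗ B)) := by
  haveI := hkA; haveI := hkB; haveI := hcA; haveI := hcB
  have hBC : LinearMap.ker B ≤ LinearMap.ker (A ∘ₗ B) := by
    intro x hx
    have hx' : B x = 0 := hx
    show A (B x) = 0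
    simp [hx']
  have hCA : LinearMap.range (A ∘ₗ B) ≤ LinearMap.range A := by
    rintro _ ⟨x, rfl⟩; exact ⟨B x, rfl⟩
  -- β
  set β : LinearMap.ker (A ∘ₗ B) →ₗ[ℂ] V := B.domRestrict (LinearMap.ker (A ∘ₗ B)) with hβ
  have hkerβ : LinearMap.ker β = comap (LinearMap.ker (A ∘ₗ B)).subtype (LinearMap.ker B) := by
    ext x; simp [hβ, LinearMap.mem_ker]
  have hranβ : LinearMap.range β = LinearMap.ker A ⊓ LinearMap.range B := by
    ext y; constructor
    · rintro ⟨⟨x, hx⟩, rfl⟩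
      exact ⟨hx, ⟨x, rfl⟩⟩
    · rintro ⟨hy1, ⟨x, rfl⟩⟩
      exact ⟨⟨x, by simpa [LinearMap.mem_ker] using hy1⟩, rfl⟩
  haveI fkβ : FiniteDimensional ℂ (LinearMap.ker β) := by
    rw [hkerβ]; exact (Submodule.comapSubtypeEquivOfLe hBC).symm.finiteDimensional
  haveI frβ : FiniteDimensional ℂ (LinearMap.range β) := by
    rw [hranβ]; exact Submodule.finiteDimensional_of_le inf_le_left
  haveI fkC : FiniteDimensional ℂ (LinearMap.ker (A ∘ₗ B)) := fd_of_ker_range β fkβ frβ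
  have i1 : finrank ℂ (LinearMap.range β) + finrank ℂ (LinearMap.ker β)
      = finrank ℂ (LinearMap.ker (A ∘ₗ B)) := LinearMap.finrank_range_add_finrank_ker β
  have i2 : finrank ℂ (LinearMap.ker β) = finrank ℂ (LinearMap.ker B) := by
    rw [hkerβ]; exact (Submodule.comapSubtypeEquivOfLe hBC).finrank_eq
  have i3 : finrank ℂ (LinearMap.range β)
      = finrank ℂ ↥(LinearMap.ker A ⊓ LinearMap.range B) := by rw [hranβ]
  -- g
  set g : V →ₗ[ℂ] V ⧸ LinearMap.range (A ∘ₗ B) := (LinearMap.range (A ∘ₗ B)).mkQ ∘ₗ A with hg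
  have hkg : LinearMap.ker g = LinearMap.range B ⊔ LinearMap.ker A := by
    ext x; constructor
    · intro hx
      have : A x ∈ LinearMap.range (A ∘ₗ B) := by
        simpa [hg, LinearMap.mem_ker, Submodule.Quotient.mk_eq_zero] using hx
      obtain ⟨y, hy⟩ := this
      refine Submodule.mem_sup.mpr ⟨B y, ⟨y, rfl⟩, x - B y, ?_, by abel⟩
      have hy' : A (B y) = A x := hy
      simp only [LinearMap.mem_ker, map_sub, hy', sub_self]
    · intro hx
      obtain ⟨b, ⟨y, rfl⟩, k, hk, rfl⟩ := Submodule.mem_sup.mp hx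
      have hk' : A k = 0 := hk
      simp only [LinearMap.mem_ker, hg, LinearMap.comp_apply, Submodule.mkQ_apply,
        Submodule.Quotient.mk_eq_zero]
      exact ⟨y, by simp [hk']⟩
  have hrg : LinearMap.range g = (LinearMap.range A).map (LinearMap.range (A ∘ₗ B)).mkQ :=
    LinearMap.range_comp A (LinearMap.range (A ∘ₗ B)).mkQ
  haveI fsup : FiniteDimensional ℂ (V ⧸ (LinearMap.range B ⊔ LinearMap.ker A)) :=
    fd_quot_of_le _ _ le_sup_left hcB
  haveI : FiniteDimensional ℂ (V ⧸ LinearMap.ker g) := by rw [hkg]; exact fsup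
  haveI frg : FiniteDimensional ℂ (LinearMap.range g) :=
    g.quotKerEquivRange.finiteDimensional
  have i4 : finrank ℂ (LinearMap.range g)
      = finrank ℂ (V ⧸ (LinearMap.range B ⊔ LinearMap.ker A)) := by
    rw [← hkg]
    exact g.quotKerEquivRange.symm.finrank_eq
  haveI fmap : FiniteDimensional ℂ ((LinearMap.range A).map (LinearMap.range (A ∘ₗ B)).mkQ) :=
    hrg ▸ frg
  haveI fcC : FiniteDimensional ℂ (V ⧸ LinearMap.range (A ∘ₗ B)) := by
    refine fd_ext ((LinearMap.range A).map (LinearMap.range (A ∘ₗ B)).mkQ) fmap ?_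
    exact (Submodule.quotientQuotientEquivQuotient _ _ hCA).symm.finiteDimensional
  have iib : finrank ℂ (V ⧸ LinearMap.range (A ∘ₗ B))
      = finrank ℂ ((LinearMap.range A).map (LinearMap.range (A ∘ₗ B)).mkQ)
        + finrank ℂ (V ⧸ LinearMap.range A) := QF _ _ hCA fcC
  have i5 : finrank ℂ ((LinearMap.range A).map (LinearMap.range (A ∘ₗ B)).mkQ)
      = finrank ℂ (V ⧸ (LinearMap.range B ⊔ LinearMap.ker A)) := by rw [← hrg, i4]
  have iia : finrank ℂ (V ⧸ LinearMap.range B)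
      = finrank ℂ ((LinearMap.range B ⊔ LinearMap.ker A).map (LinearMap.range B).mkQ)
        + finrank ℂ (V ⧸ (LinearMap.range B ⊔ LinearMap.ker A)) := QF _ _ le_sup_left hcB
  -- g2
  set g₂ : (LinearMap.ker A) →ₗ[ℂ] V ⧸ LinearMap.range B :=
    (LinearMap.range B).mkQ ∘ₗ (LinearMap.ker A).subtype with hg₂
  have hkg₂ : LinearMap.ker g₂
      = comap (LinearMap.ker A).subtype (LinearMap.ker A ⊓ LinearMap.range B) := by
    ext x
    simp [hg₂, LinearMap.mem_ker, Submodule.Quotient.mk_eq_zero, x.prop]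
  have hrg₂ : LinearMap.range g₂
      = (LinearMap.range B ⊔ LinearMap.ker A).map (LinearMap.range B).mkQ := by
    have h1 : LinearMap.range g₂ = (LinearMap.ker A).map (LinearMap.range B).mkQ := by
      rw [hg₂, LinearMap.range_comp, Submodule.range_subtype]
    rw [h1, Submodule.map_sup, Submodule.mkQ_map_self, bot_sup_eq]
  have i6 : finrank ℂ (LinearMap.range g₂) + finrank ℂ (LinearMap.ker g₂)
      = finrank ℂ (LinearMap.ker A) := LinearMap.finrank_range_add_finrank_ker g₂
  have i7 : finrank ℂ (LinearMap.ker g₂)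
      = finrank ℂ ↥(LinearMap.ker A ⊓ LinearMap.range B) := by
    rw [hkg₂]
    exact LinearEquiv.finrank_eq
      (Submodule.comapSubtypeEquivOfLe (inf_le_left : LinearMap.ker A ⊓ LinearMap.range B ≤ _))
  have i8 : finrank ℂ (LinearMap.range g₂)
      = finrank ℂ ((LinearMap.range B ⊔ LinearMap.ker A).map (LinearMap.range B).mkQ) := by
    rw [hrg₂]
  exact ⟨fkC, fcC, by omega⟩

end Alg

section Op

variable {X : Type*} [NormedAddCommGroup X] [NormedSpace ℂ X]

lemma pow_apply_add (S : X →L[ℂ] X) (i j : ℕ) (x : X) :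
    (S ^ (i + j)) x = (S ^ i) ((S ^ j) x) := by
  rw [pow_add]; rfl

lemma ker_pow_mono (S : X →L[ℂ] X) {i j : ℕ} (h : i ≤ j) :
    LinearMap.ker ((S ^ i : X →L[ℂ] X) : X →ₗ[ℂ] X) ≤ LinearMap.ker ((S ^ j : X →L[ℂ] X) : X →ₗ[ℂ] X) := by
  obtain ⟨k, rfl⟩ := Nat.exists_eq_add_of_le h
  intro x hx
  have hx' : (S ^ i) x = 0 := hx
  have : (S ^ (i + k)) x = 0 := by rw [add_comm, pow_apply_add, hx', map_zero]
  exact this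

lemma range_pow_anti (S : X →L[ℂ] X) {i j : ℕ} (h : i ≤ j) :
    LinearMap.range ((S ^ j : X →L[ℂ] X) : X →ₗ[ℂ] X) ≤ LinearMap.range ((S ^ i : X →L[ℂ] X) : X →ₗ[ℂ] X) := by
  obtain ⟨k, rfl⟩ := Nat.exists_eq_add_of_le h
  rintro _ ⟨x, rfl⟩
  exact ⟨(S ^ k) x, (pow_apply_add S i k x).symm⟩

lemma ker_stab (S : X →L[ℂ] X) {n : ℕ}
    (hn : LinearMap.ker ((S ^ n : X →L[ℂ] X) : X →ₗ[ℂ] X) = LinearMap.ker ((S ^ (n + 1) : X →L[ℂ] X) : X →ₗ[ℂ] X)) (k : ℕ) :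
    LinearMap.ker ((S ^ (n + k) : X →L[ℂ] X) : X →ₗ[ℂ] X) = LinearMap.ker ((S ^ n : X →L[ℂ] X) : X →ₗ[ℂ] X) := by
  induction k with
  | zero => rfl
  | succ k ih =>
    refine le_antisymm ?_ (ker_pow_mono S (by omega))
    intro x hx
    have h1 : (S ^ (n + 1)) ((S ^ k) x) = 0 := by
      rw [← pow_apply_add]
      have : n + 1 + k = n + (k+1) := by omega
      rw [this]; exact hx
    have h2 : (S ^ k) x ∈ LinearMap.ker ((S ^ n : X →L[ℂ] X) : X →ₗ[ℂ] X) := hn ▸ h1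
    have h3 : (S ^ (n + k)) x = 0 := by
      rw [pow_apply_add]; exact h2
    exact ih.le (by exact h3)

lemma pow_succ_apply' (S : X →L[ℂ] X) (m : ℕ) (x : X) :
    (S ^ (m + 1)) x = S ((S ^ m) x) := by
  have : m + 1 = 1 + m := by omega
  rw [this, pow_apply_add, pow_one]

lemma range_stab_step (S : X →L[ℂ] X) {n : ℕ}
    (hn : LinearMap.range ((S ^ n : X →L[ℂ] X) : X →ₗ[ℂ] X) = LinearMap.range ((S ^ (n + 1) : X →L[ℂ] X) : X →ₗ[ℂ] X)) (k : ℕ) :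
    LinearMap.range ((S ^ (n + k) : X →L[ℂ] X) : X →ₗ[ℂ] X) = LinearMap.range ((S ^ (n + k + 1) : X →L[ℂ] X) : X →ₗ[ℂ] X) := by
  induction k with
  | zero => exact hn
  | succ k ih =>
    refine le_antisymm ?_ (range_pow_anti S (by omega))
    rintro _ ⟨x, rfl⟩
    have h1 : (S ^ (n + k)) x ∈ LinearMap.range ((S ^ (n + k + 1) : X →L[ℂ] X) : X →ₗ[ℂ] X) := ih ▸ ⟨x, rfl⟩
    obtain ⟨z, hz⟩ := h1
    refine ⟨z, ?_⟩
    replace hz : (S ^ (n + k + 1)) z = (S ^ (n + k)) x := hz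
    show (S ^ (n + (k + 1) + 1)) z = (S ^ (n + (k + 1))) x
    have e : n + (k + 1) + 1 = (n + k + 1) + 1 := by omega
    rw [e, pow_succ_apply', hz, ← pow_succ_apply', show n + (k+1) = n+k+1 from by omega]

lemma range_stab (S : X →L[ℂ] X) {n : ℕ}
    (hn : LinearMap.range ((S ^ n : X →L[ℂ] X) : X →ₗ[ℂ] X) = LinearMap.range ((S ^ (n + 1) : X →L[ℂ] X) : X →ₗ[ℂ] X)) (k : ℕ) :
    LinearMap.range ((S ^ (n + k) : X →L[ℂ] X) : X →ₗ[ℂ] X) = LinearMap.range ((S ^ n : X →L[ℂ] X) : X →ₗ[ℂ] X) := by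
  induction k with
  | zero => rfl
  | succ k ih =>
    have h1 : LinearMap.range ((S ^ (n + k + 1) : X →L[ℂ] X) : X →ₗ[ℂ] X) = LinearMap.range ((S ^ (n + k) : X →L[ℂ] X) : X →ₗ[ℂ] X) :=
      (range_stab_step S hn k).symm
    have e : n + (k + 1) = n + k + 1 := by omega
    rw [e, h1, ih]

lemma coe_pow_succ (S : X →L[ℂ] X) (n : ℕ) :
    ((S ^ (n + 1) : X →L[ℂ] X) : X →ₗ[ℂ] X)
      = ((S : X →ₗ[ℂ] X) ∘ₗ ((S ^ n : X →L[ℂ] X) : X →ₗ[ℂ] X)) := by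
  rw [pow_succ']
  rfl

lemma weyl_pow (S : X →L[ℂ] X) (hk : FiniteDimensional ℂ (LinearMap.ker (S : X →ₗ[ℂ] X)))
    (hc : FiniteDimensional ℂ (X ⧸ LinearMap.range (S : X →ₗ[ℂ] X)))
    (hi : finrank ℂ (LinearMap.ker (S : X →ₗ[ℂ] X)) = finrank ℂ (X ⧸ LinearMap.range (S : X →ₗ[ℂ] X))) (n : ℕ) :
    FiniteDimensional ℂ (LinearMap.ker ((S ^ n : X →L[ℂ] X) : X →ₗ[ℂ] X))
      ∧ FiniteDimensional ℂ (X ⧸ LinearMap.range ((S ^ n : X →L[ℂ] X) : X →ₗ[ℂ] X))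
      ∧ finrank ℂ (LinearMap.ker ((S ^ n : X →L[ℂ] X) : X →ₗ[ℂ] X)) = finrank ℂ (X ⧸ LinearMap.range ((S ^ n : X →L[ℂ] X) : X →ₗ[ℂ] X)) := by
  induction n with
  | zero =>
    have hker : LinearMap.ker ((S ^ 0 : X →L[ℂ] X) : X →ₗ[ℂ] X) = (⊥ : Submodule ℂ X) := by
      ext x; simp [pow_zero, LinearMap.mem_ker]
    have hran : LinearMap.range ((S ^ 0 : X →L[ℂ] X) : X →ₗ[ℂ] X) = (⊤ : Submodule ℂ X) := by
      ext x; simp [pow_zero]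
    rw [hker, hran]
    haveI : Subsingleton (X ⧸ (⊤ : Submodule ℂ X)) :=
      Submodule.Quotient.subsingleton_iff.mpr rfl
    refine ⟨inferInstance, inferInstance, ?_⟩
    rw [finrank_bot, finrank_zero_of_subsingleton]
  | succ n ih =>
    obtain ⟨ik, ic, ii⟩ := ih
    have key := IA (S : X →ₗ[ℂ] X) ((S ^ n : X →L[ℂ] X) : X →ₗ[ℂ] X) hk ik hc ic
    rw [← coe_pow_succ] at key
    have b1 : LinearMap.ker ((S : X →ₗ[ℂ] X)) = LinearMap.ker (S : X →ₗ[ℂ] X) := rfl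
    have b2 : LinearMap.range ((S : X →ₗ[ℂ] X)) = LinearMap.range (S : X →ₗ[ℂ] X) := rfl
    have b3 : LinearMap.ker (((S ^ n : X →L[ℂ] X)) : X →ₗ[ℂ] X) = LinearMap.ker ((S ^ n : X →L[ℂ] X) : X →ₗ[ℂ] X) := rfl
    have b4 : LinearMap.range (((S ^ n : X →L[ℂ] X)) : X →ₗ[ℂ] X) = LinearMap.range ((S ^ n : X →L[ℂ] X) : X →ₗ[ℂ] X) := rfl
    have b5 : LinearMap.ker (((S ^ (n+1) : X →L[ℂ] X)) : X →ₗ[ℂ] X) = LinearMap.ker ((S ^ (n+1) : X →L[ℂ] X) : X →ₗ[ℂ] X) := rfl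
    have b6 : LinearMap.range (((S ^ (n+1) : X →L[ℂ] X)) : X →ₗ[ℂ] X) = LinearMap.range ((S ^ (n+1) : X →L[ℂ] X) : X →ₗ[ℂ] X) := rfl
    rw [b1, b2, b3, b4, b5, b6] at key
    obtain ⟨k1, k2, k3⟩ := key
    exact ⟨k1, k2, by omega⟩

lemma descent_of_weyl (S : X →L[ℂ] X) (hk : FiniteDimensional ℂ (LinearMap.ker (S : X →ₗ[ℂ] X)))
    (hc : FiniteDimensional ℂ (X ⧸ LinearMap.range (S : X →ₗ[ℂ] X)))
    (hi : finrank ℂ (LinearMap.ker (S : X →ₗ[ℂ] X)) = finrank ℂ (X ⧸ LinearMap.range (S : X →ₗ[ℂ] X))) {a : ℕ}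
    (ha : LinearMap.ker ((S ^ a : X →L[ℂ] X) : X →ₗ[ℂ] X) = LinearMap.ker ((S ^ (a + 1) : X →L[ℂ] X) : X →ₗ[ℂ] X)) :
    LinearMap.range ((S ^ a : X →L[ℂ] X) : X →ₗ[ℂ] X) = LinearMap.range ((S ^ (a + 1) : X →L[ℂ] X) : X →ₗ[ℂ] X) := by
  obtain ⟨ka, ca, ia⟩ := weyl_pow S hk hc hi a
  obtain ⟨ka1, ca1, ia1⟩ := weyl_pow S hk hc hi (a + 1)
  have hkr : finrank ℂ (LinearMap.ker ((S ^ a : X →L[ℂ] X) : X →ₗ[ℂ] X)) = finrank ℂ (LinearMap.ker ((S ^ (a+1) : X →L[ℂ] X) : X →ₗ[ℂ] X)) := by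
    rw [ha]
  have hcr : finrank ℂ (X ⧸ LinearMap.range ((S ^ (a+1) : X →L[ℂ] X) : X →ₗ[ℂ] X))
      = finrank ℂ (X ⧸ LinearMap.range ((S ^ a : X →L[ℂ] X) : X →ₗ[ℂ] X)) := by omega
  have hNP : LinearMap.range ((S ^ (a+1) : X →L[ℂ] X) : X →ₗ[ℂ] X) ≤ LinearMap.range ((S ^ a : X →L[ℂ] X) : X →ₗ[ℂ] X) :=
    range_pow_anti S (by omega)
  have hq := QF _ _ hNP ca1
  haveI := ca1
  haveI : FiniteDimensional ℂ
      ((LinearMap.range ((S ^ a : X →L[ℂ] X) : X →ₗ[ℂ] X)).map (LinearMap.range ((S ^ (a+1) : X →L[ℂ] X) : X →ₗ[ℂ] X)).mkQ) := inferInstance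
  have h0 : finrank ℂ ((LinearMap.range ((S ^ a : X →L[ℂ] X) : X →ₗ[ℂ] X)).map (LinearMap.range ((S ^ (a+1) : X →L[ℂ] X) : X →ₗ[ℂ] X)).mkQ) = 0 := by
    omega
  have hbot : (LinearMap.range ((S ^ a : X →L[ℂ] X) : X →ₗ[ℂ] X)).map (LinearMap.range ((S ^ (a+1) : X →L[ℂ] X) : X →ₗ[ℂ] X)).mkQ = ⊥ :=
    Submodule.finrank_eq_zero.mp h0
  refine le_antisymm ?_ hNP
  intro x hx
  have : (LinearMap.range ((S ^ (a+1) : X →L[ℂ] X) : X →ₗ[ℂ] X)).mkQ x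
      ∈ (LinearMap.range ((S ^ a : X →L[ℂ] X) : X →ₗ[ℂ] X)).map (LinearMap.range ((S ^ (a+1) : X →L[ℂ] X) : X →ₗ[ℂ] X)).mkQ := ⟨x, hx, rfl⟩
  rw [hbot, Submodule.mem_bot] at this
  rwa [Submodule.mkQ_apply, Submodule.Quotient.mk_eq_zero] at this

end Op

end ZAux



section Taylor

open ZProps ZAux Submodule

variable {X : Type*} [NormedAddCommGroup X] [NormedSpace ℂ X] [CompleteSpace X]

lemma taylor (T : X →L[ℂ] X) (l : ℂ) (hl : l ∈ sp T) (hasc : HasFiniteAscent (T - l • 1))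
    (hdesc : HasFiniteDescent (T - l • 1)) : l ∈ leftPoles T := by
  set S := T - l • 1 with hSdef
  have hne : {n : ℕ | LinearMap.ker ((S ^ n : X →L[ℂ] X) : X →ₗ[ℂ] X) = LinearMap.ker ((S ^ (n + 1) : X →L[ℂ] X) : X →ₗ[ℂ] X)}.Nonempty := hasc
  set a := ascent S with ha
  have haa : LinearMap.ker ((S ^ a : X →L[ℂ] X) : X →ₗ[ℂ] X) = LinearMap.ker ((S ^ (a + 1) : X →L[ℂ] X) : X →ₗ[ℂ] X) := Nat.sInf_mem hne
  obtain ⟨d, hd⟩ := hdesc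
  set m := a + d + 1 with hm
  have hker_st : ∀ k, a ≤ k → LinearMap.ker ((S ^ k : X →L[ℂ] X) : X →ₗ[ℂ] X) = LinearMap.ker ((S ^ a : X →L[ℂ] X) : X →ₗ[ℂ] X) := by
    intro k hk
    obtain ⟨j, rfl⟩ := Nat.exists_eq_add_of_le hk
    exact ker_stab S haa j
  have hran_st : ∀ k, d ≤ k → LinearMap.range ((S ^ k : X →L[ℂ] X) : X →ₗ[ℂ] X) = LinearMap.range ((S ^ d : X →L[ℂ] X) : X →ₗ[ℂ] X) := by
    intro k hk
    obtain ⟨j, rfl⟩ := Nat.exists_eq_add_of_le hk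
    exact range_stab S hd j
  set K := LinearMap.ker ((S ^ m : X →L[ℂ] X) : X →ₗ[ℂ] X) with hK
  have hK2m : LinearMap.ker ((S ^ (2 * m) : X →L[ℂ] X) : X →ₗ[ℂ] X) = K := by
    rw [hK, hker_st (2 * m) (by omega), hker_st m (by omega)]
  have hR2m : LinearMap.range ((S ^ (2 * m) : X →L[ℂ] X) : X →ₗ[ℂ] X) = LinearMap.range ((S ^ m : X →L[ℂ] X) : X →ₗ[ℂ] X) := by
    rw [hran_st (2 * m) (by omega), hran_st m (by omega)]
  have hsurjQ : ∀ x : X, ∃ z : X, x - (S ^ m) z ∈ K := by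
    intro x
    have hx : (S ^ m) x ∈ LinearMap.range ((S ^ (2 * m) : X →L[ℂ] X) : X →ₗ[ℂ] X) := by
      rw [hR2m]; exact ⟨x, rfl⟩
    obtain ⟨z, hz⟩ := hx
    refine ⟨z, ?_⟩
    show (S ^ m) (x - (S ^ m) z) = 0
    rw [map_sub]
    have h2 : (S ^ m) ((S ^ m) z) = (S ^ m) x := by
      rw [← pow_apply_add S m m z, show m + m = 2 * m from by omega]
      exact hz
    rw [h2, sub_self]
  -- l is an eigenvalue
  have hker_ne : LinearMap.ker (S : X →ₗ[ℂ] X) ≠ ⊥ := by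
    intro h0
    have hinj : ∀ k : ℕ, LinearMap.ker ((S ^ k : X →L[ℂ] X) : X →ₗ[ℂ] X) = ⊥ := by
      intro k
      induction k with
      | zero => ext x; simp [LinearMap.mem_ker]
      | succ k ih =>
        rw [eq_bot_iff]
        intro x hx
        have hx' : S ((S ^ k) x) = 0 := by rw [← pow_succ_apply']; exact hx
        have : (S ^ k) x ∈ LinearMap.ker (S : X →ₗ[ℂ] X) := hx'
        rw [h0, Submodule.mem_bot] at this
        have : x ∈ LinearMap.ker ((S ^ k : X →L[ℂ] X) : X →ₗ[ℂ] X) := this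
        rw [ih, Submodule.mem_bot] at this
        simp [this]
    have hsurj : LinearMap.range (S : X →ₗ[ℂ] X) = ⊤ := by
      rw [eq_top_iff]
      rintro x -
      obtain ⟨z, hz⟩ := hsurjQ x
      rw [hK, hinj m, Submodule.mem_bot, sub_eq_zero] at hz
      refine ⟨(S ^ (a + d)) z, ?_⟩
      rw [hz]
      exact (pow_succ_apply' S (a + d) z).symm
    have hU : IsUnit S := by
      let e := ContinuousLinearEquiv.ofBijective S h0 hsurj
      have hee : ∀ y, e y = S y := fun y => rfl
      refine isUnit_iff_exists.mpr ⟨(e.symm : X →L[ℂ] X), ?_, ?_⟩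
      · ext x
        simp only [ContinuousLinearMap.mul_apply, ContinuousLinearMap.one_apply,
          ContinuousLinearEquiv.coe_coe]
        rw [← hee]
        exact e.apply_symm_apply x
      · ext x
        simp only [ContinuousLinearMap.mul_apply, ContinuousLinearMap.one_apply,
          ContinuousLinearEquiv.coe_coe]
        rw [← hee x]
        exact e.symm_apply_apply x
    have : ¬ IsUnit (algebraMap ℂ (X →L[ℂ] X) l - T) := spectrum.mem_iff.mp hl
    apply this
    have : algebraMap ℂ (X →L[ℂ] X) l - T = -S := by
      rw [hSdef, Algebra.algebraMap_eq_smul_one, neg_sub]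
    rw [this]
    exact hU.neg
  obtain ⟨v, hv, hv0⟩ := (Submodule.ne_bot_iff _).mp hker_ne
  have hspa : l ∈ spa T := by
    rintro ⟨c, hc, hb⟩
    have h1 := hb v
    have h2 : S v = 0 := hv
    rw [← hSdef, h2, norm_zero] at h1
    have : 0 < c * ‖v‖ := mul_pos hc (norm_pos_iff.mpr hv0)
    linarith
  -- closedness of range (S ^ m)
  haveI hKc : IsClosed ((K : Submodule ℂ X) : Set X) := ContinuousLinearMap.isClosed_ker _
  set Vl : (X ⧸ K) →ₗ[ℂ] X := K.liftQ ((S ^ m : X →L[ℂ] X) : X →ₗ[ℂ] X) (le_refl K) with hVl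
  have hVlmk : ∀ x : X, Vl (Submodule.Quotient.mk x) = (S ^ m) x := fun x => rfl
  have hVbound : ∀ q : X ⧸ K, ‖Vl q‖ ≤ ‖(S ^ m : X →L[ℂ] X)‖ * ‖q‖ := by
    intro q
    obtain ⟨x, rfl⟩ := Submodule.Quotient.mk_surjective K q
    refine le_of_forall_pos_le_add (fun ε hε => ?_)
    have hden : (0:ℝ) < ‖(S ^ m : X →L[ℂ] X)‖ + 1 := by positivity
    obtain ⟨y, hy, hylt⟩ := Submodule.Quotient.norm_mk_lt
      (Submodule.Quotient.mk x : X ⧸ K) (show (0:ℝ) < ε / (‖(S ^ m : X →L[ℂ] X)‖ + 1) by positivity)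
    have hyx : (S ^ m) y = (S ^ m) x := by
      have hmem : y - x ∈ K := (Submodule.Quotient.eq K).mp hy
      have : (S ^ m) (y - x) = 0 := hmem
      rw [map_sub, sub_eq_zero] at this
      exact this
    rw [hVlmk, ← hyx]
    calc ‖(S ^ m) y‖ ≤ ‖(S ^ m : X →L[ℂ] X)‖ * ‖y‖ := (S ^ m).le_opNorm y
      _ ≤ ‖(S ^ m : X →L[ℂ] X)‖ * (‖(Submodule.Quotient.mk x : X ⧸ K)‖
            + ε / (‖(S ^ m : X →L[ℂ] X)‖ + 1)) := by
          refine mul_le_mul_of_nonneg_left ?_ (norm_nonneg _)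
          exact le_of_lt hylt
      _ ≤ ‖(S ^ m : X →L[ℂ] X)‖ * ‖(Submodule.Quotient.mk x : X ⧸ K)‖ + ε := by
          rw [mul_add]
          have h3 : ‖(S ^ m : X →L[ℂ] X)‖ * (ε / (‖(S ^ m : X →L[ℂ] X)‖ + 1)) ≤ ε := by
            rw [mul_div_assoc'] at *
            rw [div_le_iff₀ hden]
            nlinarith [norm_nonneg (S ^ m : X →L[ℂ] X)]
          linarith
  set V : (X ⧸ K) →L[ℂ] X := Vl.mkContinuous ‖(S ^ m : X →L[ℂ] X)‖ hVbound with hV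
  have hVmk : ∀ x : X, V (Submodule.Quotient.mk x) = (S ^ m) x := fun x => rfl
  set mkC : X →L[ℂ] (X ⧸ K) := K.mkQ.mkContinuous 1
    (fun x => by simpa using Submodule.Quotient.norm_mk_le K x) with hmkC
  have hmkCmk : ∀ x : X, mkC x = (Submodule.Quotient.mk x : X ⧸ K) := fun x => rfl
  set U : (X ⧸ K) →L[ℂ] (X ⧸ K) := mkC.comp V with hU
  have hUmk : ∀ x : X, U (Submodule.Quotient.mk x)
      = (Submodule.Quotient.mk ((S ^ m) x) : X ⧸ K) := fun x => rfl
  have hUker : LinearMap.ker (U : (X ⧸ K) →ₗ[ℂ] (X ⧸ K)) = ⊥ := by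
    rw [eq_bot_iff]
    intro q hq
    obtain ⟨x, rfl⟩ := Submodule.Quotient.mk_surjective K q
    have h1 : (Submodule.Quotient.mk ((S ^ m) x) : X ⧸ K) = 0 := hq
    rw [Submodule.Quotient.mk_eq_zero] at h1
    have h2 : (S ^ (2 * m)) x = 0 := by
      rw [show 2 * m = m + m from by omega, pow_apply_add S m m x]
      exact h1
    have h3 : x ∈ K := by rw [← hK2m]; exact h2
    rwa [Submodule.mem_bot, Submodule.Quotient.mk_eq_zero]
  have hUran : LinearMap.range (U : (X ⧸ K) →ₗ[ℂ] (X ⧸ K)) = ⊤ := by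
    rw [eq_top_iff]
    rintro q -
    obtain ⟨y, rfl⟩ := Submodule.Quotient.mk_surjective K q
    obtain ⟨z, hz⟩ := hsurjQ y
    refine ⟨Submodule.Quotient.mk z, ?_⟩
    show U (Submodule.Quotient.mk z) = Submodule.Quotient.mk y
    rw [hUmk z]
    rw [Submodule.Quotient.eq]
    exact neg_mem_iff.mp (by simpa [neg_sub] using hz)
  set e := ContinuousLinearEquiv.ofBijective U hUker hUran with he
  have hbdd : ∀ q : X ⧸ K, ‖q‖ ≤ ‖(e.symm : (X ⧸ K) →L[ℂ] (X ⧸ K))‖₊ * ‖V q‖ := by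
    intro q
    have h1 : e.symm (U q) = q := by
      have : U q = e q := rfl
      rw [this, ContinuousLinearEquiv.symm_apply_apply]
    have h2 : ‖q‖ ≤ ‖(e.symm : (X ⧸ K) →L[ℂ] (X ⧸ K))‖ * ‖U q‖ := by
      conv_lhs => rw [← h1]
      exact (e.symm : (X ⧸ K) →L[ℂ] (X ⧸ K)).le_opNorm (U q)
    have h3 : ‖U q‖ ≤ ‖V q‖ := by
      have : U q = (Submodule.Quotient.mk (V q) : X ⧸ K) := rfl
      rw [this]
      exact Submodule.Quotient.norm_mk_le K (V q)
    calc ‖q‖ ≤ ‖(e.symm : (X ⧸ K) →L[ℂ] (X ⧸ K))‖ * ‖U q‖ := h2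
      _ ≤ ‖(e.symm : (X ⧸ K) →L[ℂ] (X ⧸ K))‖ * ‖V q‖ :=
          mul_le_mul_of_nonneg_left h3 (norm_nonneg _)
      _ = ‖(e.symm : (X ⧸ K) →L[ℂ] (X ⧸ K))‖₊ * ‖V q‖ := by rw [coe_nnnorm]
  have hanti := V.antilipschitz_of_bound hbdd
  have hclosedV : IsClosed (Set.range V) := hanti.isClosed_range V.uniformContinuous
  have hsetV : Set.range ⇑V = ((LinearMap.range ((S ^ m : X →L[ℂ] X) : X →ₗ[ℂ] X) : Submodule ℂ X) : Set X) := by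
    ext y; constructor
    · rintro ⟨q, rfl⟩
      obtain ⟨x, rfl⟩ := Submodule.Quotient.mk_surjective K q
      rw [hVmk]
      exact ⟨x, rfl⟩
    · rintro ⟨x, rfl⟩
      exact ⟨Submodule.Quotient.mk x, hVmk x⟩
  have hclosedRm : IsClosed ((LinearMap.range ((S ^ m : X →L[ℂ] X) : X →ₗ[ℂ] X) : Submodule ℂ X) : Set X) := by
    rw [← hsetV]; exact hclosedV
  -- range (S ^ (a+1)) = range (S ^ m)
  have hreq : LinearMap.range ((S ^ (a + 1) : X →L[ℂ] X) : X →ₗ[ℂ] X) = LinearMap.range ((S ^ m : X →L[ℂ] X) : X →ₗ[ℂ] X) := by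
    refine le_antisymm ?_ (range_pow_anti S (by omega))
    rintro _ ⟨x, rfl⟩
    obtain ⟨z, hz⟩ := hsurjQ x
    have hzk : (S ^ (a + 1)) (x - (S ^ m) z) = 0 := by
      have h1 : x - (S ^ m) z ∈ LinearMap.ker ((S ^ a : X →L[ℂ] X) : X →ₗ[ℂ] X) := by
        rw [← hker_st m (by omega)]; exact hz
      have h2 : x - (S ^ m) z ∈ LinearMap.ker ((S ^ (a + 1) : X →L[ℂ] X) : X →ₗ[ℂ] X) :=
        ker_pow_mono S (by omega) h1
      exact h2
    have : (S ^ (a + 1)) x = (S ^ (a + 1 + m)) z := by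
      have h4 : (S ^ (a + 1)) ((S ^ m) z) = (S ^ (a + 1 + m)) z := (pow_apply_add S (a+1) m z).symm
      have h5 : (S ^ (a + 1)) x - (S ^ (a + 1)) ((S ^ m) z) = 0 := by
        rw [← map_sub]; exact hzk
      rw [sub_eq_zero] at h5
      rw [h5, h4]
    show (S ^ (a + 1)) x ∈ LinearMap.range ((S ^ m : X →L[ℂ] X) : X →ₗ[ℂ] X)
    rw [this]
    exact range_pow_anti S (by omega) ⟨z, rfl⟩
  exact ⟨hspa, hasc, by rw [← ha, hreq]; exact hclosedRm⟩

end Taylor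


open ZProps in
theorem stmt8 {X : Type*} [NormedAddCommGroup X] [NormedSpace ℂ X] [CompleteSpace X]
    (hinf : ¬ FiniteDimensional ℂ X) (T : X →L[ℂ] X) (h : PropZPa T) :
    leftPoles0 T = leftPoles T ∧ leftPoles T = poles0 T ∧ poles0 T = poles T := by
  have hW : ∀ l ∈ leftPoles T, l ∈ sp T ∧ IsWeylOp (T - l • 1) := by
    intro l hlp
    have hmem : l ∈ sp T \ spW T := by rw [h]; exact hlp
    exact ⟨hmem.1, not_not.mp hmem.2⟩
  have hPL : poles T ⊆ leftPoles T := fun l hl => taylor T l hl.1 hl.2.1 hl.2.2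
  have hLP0 : leftPoles T ⊆ poles0 T := by
    intro l hlp
    obtain ⟨hsp, ⟨hk, hc, hcl⟩, hi⟩ := hW l hlp
    obtain ⟨hspa, hasc, hclr⟩ := hlp
    refine ⟨⟨hsp, hasc, ?_⟩, hk⟩
    obtain ⟨a, haa⟩ := hasc
    exact ⟨a, ZAux.descent_of_weyl (T - l • 1) hk hc hi haa⟩
  refine ⟨?_, ?_, ?_⟩
  · apply Set.Subset.antisymm
    · exact fun l hl => hl.1
    · intro l hl
      exact ⟨hl, (hW l hl).2.1.1⟩
  · apply Set.Subset.antisymm hLP0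
    intro l hl
    exact hPL hl.1
  · apply Set.Subset.antisymm
    · exact fun l hl => hl.1
    · intro l hl
      exact hLP0 (hPL hl)
end
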